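/- Let F be a field and I a non-empty index set, A = F[t_i | i ∈ I]. Then the following are equivalent: (1) for every ideal a of A, V(a) = ∅ iff a = A; (2) every field extension K of F which is generated as an F-algebra by a family (u_i)_{i ∈ I} of elements indexed by I (i.e. K = F[u_i | i ∈ I]) is trivial, K = F. -/

import Mathlib

universe u

/-- For a field `F` and a non-empty index set `I` with `A = F[t_i | i ∈ I]`, the
following are equivalent: (1) for every ideal `a` of `A`, `V(a) = ∅` iff `a = A`;
(2) every field extension `K` of `F` which is generated as an `F`-algebra by a family
`(u_i)_{i ∈ I}` is trivial, i.e. the structure map `F → K` is surjective. -/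
theorem stmt_10 {F : Type u} {I : Type u} [Field F] [Nonempty I] :
    (∀ a : Ideal (MvPolynomial I F), MvPolynomial.zeroLocus F a = ∅ ↔ a = ⊤) ↔
    (∀ (K : Type u) [Field K] [Algebra F K] (u : I → K),
      Algebra.adjoin F (Set.range u) = ⊤ → Function.Surjective (algebraMap F K)) := by
  constructor
  · intro h K _ _ u hu
    set f : MvPolynomial I F →ₐ[F] K := MvPolynomial.aeval u with hf
    set a : Ideal (MvPolynomial I F) := RingHom.ker f with hadef
    have hsurj : Function.Surjective f := by
      rw [← AlgHom.range_eq_top, ← Algebra.adjoin_range_eq_range_aeval]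
      exact hu
    have ha : a ≠ ⊤ := by
      intro htop
      have h1 : (1 : MvPolynomial I F) ∈ a := htop ▸ Submodule.mem_top
      rw [hadef, RingHom.mem_ker, map_one] at h1
      exact one_ne_zero h1
    have hV : MvPolynomial.zeroLocus F a ≠ ∅ := fun hV => ha ((h a).mp hV)
    obtain ⟨x, hx⟩ := Set.nonempty_iff_ne_empty.mpr hV
    rw [MvPolynomial.mem_zeroLocus_iff] at hx
    have hker : ∀ p ∈ a, (MvPolynomial.aeval x : MvPolynomial I F →ₐ[F] F) p = 0 := by
      intro p hp
      have heq : (MvPolynomial.aeval x : MvPolynomial I F →ₐ[F] F) p = MvPolynomial.eval x p :=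
        RingHom.congr_fun (MvPolynomial.coe_aeval_eq_eval x) p
      rw [heq]
      exact hx p hp
    let e : (MvPolynomial I F ⧸ a) ≃ₐ[F] K :=
      Ideal.quotientKerAlgEquivOfSurjective hsurj
    let lft : (MvPolynomial I F ⧸ a) →ₐ[F] F :=
      Ideal.Quotient.liftₐ a (MvPolynomial.aeval x) hker
    let ψ : K →ₐ[F] F := lft.comp e.symm.toAlgHom
    have hinj : Function.Injective ψ := (ψ : K →+* F).injective
    intro k
    refine ⟨ψ k, hinj ?_⟩
    have h5 := ψ.commutes (ψ k)
    simp only [Algebra.algebraMap_self, RingHom.id_apply] at h5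
    exact h5
  · intro h a
    constructor
    · intro hV
      by_contra hne
      obtain ⟨m, hm, ham⟩ := Ideal.exists_le_maximal a hne
      haveI := hm
      letI : Field (MvPolynomial I F ⧸ m) := Ideal.Quotient.field m
      set u : I → MvPolynomial I F ⧸ m := fun i => Ideal.Quotient.mkₐ F m (MvPolynomial.X i) with hudef
      have hgen : Algebra.adjoin F (Set.range u) = ⊤ := by
        have hrange : Set.range u = (Ideal.Quotient.mkₐ F m) '' (Set.range MvPolynomial.X) := by
          rw [← Set.range_comp]; rfl
        rw [hrange, Algebra.adjoin_image, MvPolynomial.adjoin_range_X, Algebra.map_top,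
          AlgHom.range_eq_top]
        exact Ideal.Quotient.mkₐ_surjective F m
      have hsur := h _ u hgen
      choose x hxeq using fun i => hsur (u i)
      have hmem : x ∈ MvPolynomial.zeroLocus F a := by
        rw [MvPolynomial.mem_zeroLocus_iff]
        intro p hp
        have h1 : Ideal.Quotient.mkₐ F m p = 0 := by
          rw [Ideal.Quotient.mkₐ_eq_mk, Ideal.Quotient.eq_zero_iff_mem]; exact ham hp
        have h2 : Ideal.Quotient.mkₐ F m p = MvPolynomial.aeval u p := by
          conv_lhs => rw [MvPolynomial.aeval_unique (Ideal.Quotient.mkₐ F m)]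
          rfl
        have h3 : MvPolynomial.aeval u p
            = algebraMap F (MvPolynomial I F ⧸ m) (MvPolynomial.aeval x p) := by
          have : u = fun i => algebraMap F (MvPolynomial I F ⧸ m) (x i) := by
            funext i; exact (hxeq i).symm
          rw [this]
          exact MvPolynomial.aeval_algebraMap_apply _ x p
        rw [h2, h3] at h1
        rw [← map_zero (algebraMap F (MvPolynomial I F ⧸ m))] at h1
        have h4 : MvPolynomial.aeval x p = 0 :=
          (algebraMap F (MvPolynomial I F ⧸ m)).injective h1
        exact h4
      rw [hV] at hmem
      exact hmem
    · rintro rfl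
      ext x
      simp only [Set.mem_empty_iff_false, iff_false, MvPolynomial.mem_zeroLocus_iff]
      intro hx
      have := hx 1 Submodule.mem_top
      simp at this
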